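/- Let ρ be a map as above. Then (K, ⊴_ρ) is a join-semilattice (i.e., ⊴_ρ is a partial order in which every two elements have a least upper bound) if and only if ρ satisfies: for all α < β < γ < ω1 and all n ∈ ω, (ρ1) ρ(α,β) is non-decreasing; (ρ2) ρ(α,γ)(n) ≤ max{ρ(α,β)(n), ρ(β,γ)(n)}; (ρ3) ρ(α,β)(n) ≤ max{ρ(α,γ)(n), ρ(β,γ)(n)}; (ρ4) ρ(β,γ)(n) ≤ max{ρ(α,γ)(n), ρ(β,γ)(0)}. -/

import Mathlib

/-- The first uncountable ordinal `ω₁`, as the type of ordinals `< ω₁`. -/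
abbrev Omega1 : Type 1 := {o : Ordinal // o < (Cardinal.aleph 1).ord}

/-- The underlying set `K = {0} ∪ (ω₁ × ω × ω)`; `none` plays the role of `0`. -/
abbrev KType : Type 1 := Option (Omega1 × ℕ × ℕ)

/-- The relation `⊴_ρ` on `K` induced by `ρ`: `0 ⊴ x` for all `x`, and
`(α,n,m) ⊴ (β,n',m')` iff `α ≤ β`, `n ≤ n'`, `m ≤ m'` and `ρ α β n ≤ m'`. -/
def KRel (ρ : Omega1 → Omega1 → ℕ → ℕ) : KType → KType → Prop
  | none, _ => True
  | some _, none => False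
  | some (α, n, m), some (β, n', m') => α ≤ β ∧ n ≤ n' ∧ m ≤ m' ∧ ρ α β n ≤ m'

@[simp] lemma KRel_none {ρ : Omega1 → Omega1 → ℕ → ℕ} {x : KType} : KRel ρ none x := trivial

@[simp] lemma KRel_some_none {ρ : Omega1 → Omega1 → ℕ → ℕ} {p : Omega1 × ℕ × ℕ} :
    KRel ρ (some p) none ↔ False := by
  obtain ⟨α, n, m⟩ := p; exact Iff.rfl

@[simp] lemma KRel_some_some {ρ : Omega1 → Omega1 → ℕ → ℕ} {α β : Omega1} {n m n' m' : ℕ} :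
    KRel ρ (some (α, n, m)) (some (β, n', m')) ↔
      (α ≤ β ∧ n ≤ n' ∧ m ≤ m' ∧ ρ α β n ≤ m') := Iff.rfl

lemma omega1_exists_gt (β : Omega1) : ∃ γ : Omega1, β < γ := by
  refine ⟨⟨Order.succ β.1, (Cardinal.isSuccLimit_ord (Cardinal.aleph0_le_aleph 1)).succ_lt β.2⟩, ?_⟩
  exact Order.lt_succ β.1

theorem K_joinSemilattice_iff (ρ : Omega1 → Omega1 → ℕ → ℕ)
    (hdiag : ∀ α : Omega1, ∀ n : ℕ, ρ α α n = 0) :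
    (IsPartialOrder KType (KRel ρ) ∧
      ∀ x y : KType, ∃ z, KRel ρ x z ∧ KRel ρ y z ∧
        ∀ w, KRel ρ x w → KRel ρ y w → KRel ρ z w) ↔
    (∀ α β γ : Omega1, α < β → β < γ → ∀ n : ℕ,
      Monotone (ρ α β) ∧
      ρ α γ n ≤ max (ρ α β n) (ρ β γ n) ∧
      ρ α β n ≤ max (ρ α γ n) (ρ β γ n) ∧
      ρ β γ n ≤ max (ρ α γ n) (ρ β γ 0)) := by
  constructor
  · rintro ⟨hpo, hjoin⟩ α β γ hab hbc n
    have trans : ∀ {a b c : KType}, KRel ρ a b → KRel ρ b c → KRel ρ a c :=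
      fun {a b c} => hpo.toIsPreorder.toIsTrans.trans a b c
    refine ⟨?_, ?_, ?_, ?_⟩
    · -- monotone
      intro k k' hk
      have h1 : KRel ρ (some (α, k, 0)) (some (α, k', 0)) := by
        simp [hdiag, hk]
      have h2 : KRel ρ (some (α, k', 0)) (some (β, k', ρ α β k')) := by
        simp [hab.le]
      exact (trans h1 h2).2.2.2
    · -- ρ2
      have h1 : KRel ρ (some (α, n, 0)) (some (β, n, ρ α β n)) := by simp [hab.le]
      have h2 : KRel ρ (some (β, n, ρ α β n)) (some (γ, n, max (ρ α β n) (ρ β γ n))) := by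
        simp [hbc.le]
      exact (trans h1 h2).2.2.2
    · -- ρ3
      obtain ⟨z, hxz, hyz, hleast⟩ := hjoin (some (α, n, 0)) (some (β, n, 0))
      obtain (_ | ⟨δ, k, l⟩) := z
      · simp at hxz
      have hzw' : KRel ρ (some (δ, k, l)) (some (β, n, ρ α β n)) := by
        refine hleast _ ?_ ?_
        · simp [hab.le]
        · simp [hdiag]
      have hδ : δ = β := le_antisymm hzw'.1 hyz.1
      have hρl : ρ α β n ≤ l := by
        have := hxz.2.2.2; rwa [hδ] at this
      have hzw : KRel ρ (some (δ, k, l)) (some (γ, n, max (ρ α γ n) (ρ β γ n))) := by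
        refine hleast _ ?_ ?_
        · exact ⟨(hab.trans hbc).le, le_rfl, Nat.zero_le _, le_max_left _ _⟩
        · exact ⟨hbc.le, le_rfl, Nat.zero_le _, le_max_right _ _⟩
      exact hρl.trans hzw.2.2.1
    · -- ρ4
      obtain ⟨z, hxz, hyz, hleast⟩ := hjoin (some (α, n, 0)) (some (β, 0, 0))
      obtain (_ | ⟨δ, k, l⟩) := z
      · simp at hxz
      have hzw' : KRel ρ (some (δ, k, l)) (some (β, n, ρ α β n)) := by
        refine hleast _ ?_ ?_
        · exact ⟨hab.le, le_rfl, Nat.zero_le _, le_rfl⟩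
        · exact ⟨le_rfl, Nat.zero_le _, Nat.zero_le _, by simp [hdiag]⟩
      have hδ : δ = β := le_antisymm hzw'.1 hyz.1
      have hk : k = n := le_antisymm hzw'.2.1 hxz.2.1
      have hzw : KRel ρ (some (δ, k, l)) (some (γ, n, max (ρ α γ n) (ρ β γ 0))) := by
        refine hleast _ ?_ ?_
        · exact ⟨(hab.trans hbc).le, le_rfl, Nat.zero_le _, le_max_left _ _⟩
        · exact ⟨hbc.le, Nat.zero_le _, Nat.zero_le _, le_max_right _ _⟩
      have := hzw.2.2.2
      rwa [hδ, hk] at this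
  · intro h
    -- generalized properties
    have mono : ∀ α β : Omega1, α ≤ β → Monotone (ρ α β) := by
      intro α β hab
      rcases eq_or_lt_of_le hab with rfl | hlt
      · intro a b _; simp [hdiag]
      · obtain ⟨γ, hg⟩ := omega1_exists_gt β
        exact (h α β γ hlt hg 0).1
    have hr2 : ∀ α β γ : Omega1, α ≤ β → β ≤ γ → ∀ n,
        ρ α γ n ≤ max (ρ α β n) (ρ β γ n) := by
      intro α β γ hab hbc n
      rcases eq_or_lt_of_le hab with rfl | hab
      · exact le_max_right _ _
      rcases eq_or_lt_of_le hbc with rfl | hbc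
      · exact le_max_left _ _
      exact (h α β γ hab hbc n).2.1
    have hr3 : ∀ α β γ : Omega1, α ≤ β → β ≤ γ → ∀ n,
        ρ α β n ≤ max (ρ α γ n) (ρ β γ n) := by
      intro α β γ hab hbc n
      rcases eq_or_lt_of_le hab with rfl | hab
      · simp [hdiag]
      rcases eq_or_lt_of_le hbc with rfl | hbc
      · exact le_max_left _ _
      exact (h α β γ hab hbc n).2.2.1
    have hr4 : ∀ α β γ : Omega1, α ≤ β → β ≤ γ → ∀ n,
        ρ β γ n ≤ max (ρ α γ n) (ρ β γ 0) := by
      intro α β γ hab hbc n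
      rcases eq_or_lt_of_le hab with rfl | hab
      · exact le_max_left _ _
      rcases eq_or_lt_of_le hbc with rfl | hbc
      · simp [hdiag]
      exact (h α β γ hab hbc n).2.2.2
    have hrefl : ∀ x : KType, KRel ρ x x := by
      rintro (_ | ⟨α, n, m⟩)
      · trivial
      · simp [hdiag]
    constructor
    · refine { refl := hrefl, trans := ?_, antisymm := ?_ }
      · rintro (_ | ⟨α, n, m⟩) (_ | ⟨β, n', m'⟩) (_ | ⟨γ, n'', m''⟩) h1 h2
        all_goals try trivial
        all_goals try exact h1.elim
        all_goals try exact h2.elim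
        obtain ⟨hab, hn, hm, hρ⟩ := h1
        obtain ⟨hbc, hn', hm', hρ'⟩ := h2
        refine ⟨hab.trans hbc, hn.trans hn', hm.trans hm', ?_⟩
        calc ρ α γ n ≤ max (ρ α β n) (ρ β γ n) := hr2 α β γ hab hbc n
          _ ≤ m'' := max_le (hρ.trans hm') ((mono β γ hbc hn).trans hρ')
      · rintro (_ | ⟨α, n, m⟩) (_ | ⟨β, n', m'⟩) h1 h2
        all_goals try rfl
        all_goals try exact h1.elim
        all_goals try exact h2.elim
        obtain ⟨hab, hn, hm, -⟩ := h1
        obtain ⟨hba, hn', hm', -⟩ := h2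
        obtain rfl : α = β := le_antisymm hab hba
        obtain rfl : n = n' := le_antisymm hn hn'
        obtain rfl : m = m' := le_antisymm hm hm'
        rfl
    · have key : ∀ (α β : Omega1) (n m n' m' : ℕ), α ≤ β →
          ∃ z, KRel ρ (some (α, n, m)) z ∧ KRel ρ (some (β, n', m')) z ∧
            ∀ w, KRel ρ (some (α, n, m)) w → KRel ρ (some (β, n', m')) w → KRel ρ z w := by
        intro α β n m n' m' hab
        refine ⟨some (β, max n n', max (max m m') (ρ α β n)), ?_, ?_, ?_⟩
        · exact ⟨hab, le_max_left _ _, (le_max_left m m').trans (le_max_left _ _),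
            le_max_right _ _⟩
        · refine ⟨le_rfl, le_max_right _ _, (le_max_right m m').trans (le_max_left _ _), ?_⟩
          simp [hdiag]
        · rintro (_ | ⟨δ, k, l⟩) hxw hyw
          · simp at hxw
          obtain ⟨haδ, hnk, hml, hρx⟩ := hxw
          obtain ⟨hbδ, hn'k, hm'l, hρy⟩ := hyw
          have hρn : ρ β δ n ≤ l := by
            rcases eq_or_lt_of_le hab with rfl | hab'
            · exact hρx
            calc ρ β δ n ≤ max (ρ α δ n) (ρ β δ 0) := hr4 α β δ hab'.le hbδ n
              _ ≤ l := max_le hρx ((mono β δ hbδ (Nat.zero_le n')).trans hρy)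
          have hρab : ρ α β n ≤ l :=
            (hr3 α β δ hab hbδ n).trans (max_le hρx hρn)
          refine ⟨hbδ, max_le hnk hn'k, max_le (max_le hml hm'l) hρab, ?_⟩
          rcases max_choice n n' with hc | hc <;> rw [hc]
          · exact hρn
          · exact hρy
      rintro (_ | ⟨⟨α, n, m⟩⟩) (_ | ⟨⟨β, n', m'⟩⟩)
      · exact ⟨none, trivial, trivial, fun w _ h => h⟩
      · exact ⟨some (β, n', m'), trivial, hrefl _, fun w _ h => h⟩
      · exact ⟨some (α, n, m), hrefl _, trivial, fun w h _ => h⟩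
      · rcases le_total α β with hab | hba
        · exact key α β n m n' m' hab
        · obtain ⟨z, h1, h2, hl⟩ := key β α n' m' n m hba
          exact ⟨z, h2, h1, fun w hw1 hw2 => hl w hw2 hw1⟩
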